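/- In a bipartite-like setting with high minimum cross-degree: let (A,B) be a partition of the vertices of an n'-vertex graph G' such that every vertex of A has at least (1/2 - 3/(22k))n' neighbors in B and every vertex of B has at least (1/2 - 3/(22k))n' neighbors in A, where k ≥ 2 and n' is sufficiently large (n' ≥ 22k·(k+1)·4 suffices). If some vertex v ∈ A has at least k neighbors inside A, then G' contains a copy of the complete tripartite graph K_{1,k,k}. -/

import Mathlib

/-- High minimum cross-degree in a bipartition plus a vertex with k neighbors in its own
part forces a copy of K_{1,k,k}. -/
theorem stmt4 {V : Type*} [Fintype V] [DecidableEq V] (G : SimpleGraph V) [DecidableRel G.Adj]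
    (A : Finset V) (k n' : ℕ) (hk : 2 ≤ k) (hn : Fintype.card V = n')
    (hn2 : 22 * k * (k + 1) * 4 ≤ n')
    (hA : ∀ a ∈ A, (1 / 2 - 3 / (22 * (k : ℝ))) * (n' : ℝ) ≤ (((Aᶜ).filter (G.Adj a)).card : ℝ))
    (hB : ∀ b ∈ Aᶜ, (1 / 2 - 3 / (22 * (k : ℝ))) * (n' : ℝ) ≤ ((A.filter (G.Adj b)).card : ℝ))
    (v : V) (hv : v ∈ A) (hvdeg : k ≤ (A.filter (G.Adj v)).card) :
    ∃ (v0 : V) (S T : Finset V), S.card = k ∧ T.card = k ∧ Disjoint S T ∧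
      v0 ∉ S ∧ v0 ∉ T ∧ (∀ s ∈ S, G.Adj v0 s) ∧ (∀ t ∈ T, G.Adj v0 t) ∧
      (∀ s ∈ S, ∀ t ∈ T, G.Adj s t) := by
  classical
  have hkR : (2:ℝ) ≤ (k:ℝ) := by exact_mod_cast hk
  have hkpos : (0:ℝ) < (k:ℝ) := by linarith
  set c : ℝ := 1 / 2 - 3 / (22 * (k:ℝ)) with hc
  have hcval : c * (22 * (k:ℝ)) = 11 * k - 3 := by
    rw [hc]; field_simp; ring
  have hcpos : 0 < c := by
    have h1 : 3 / (22 * (k:ℝ)) ≤ 3 / 44 := by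
      apply div_le_div_of_nonneg_left (by norm_num) (by norm_num) (by linarith)
    rw [hc]; linarith
  have hn'pos : 0 < n' := by nlinarith
  have hn'R : (0:ℝ) < (n':ℝ) := by exact_mod_cast hn'pos
  have hn2R : (22 * (k:ℝ) * ((k:ℝ) + 1) * 4) ≤ (n':ℝ) := by exact_mod_cast hn2
  -- B nonempty
  have hBne : (Aᶜ : Finset V).Nonempty := by
    have h1 := hA v hv
    have h2 : (0:ℝ) < ((Aᶜ.filter (G.Adj v)).card : ℝ) := lt_of_lt_of_le (by positivity) h1
    have h3 : 0 < (Aᶜ.filter (G.Adj v)).card := by exact_mod_cast h2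
    obtain ⟨b, hb⟩ := Finset.card_pos.mp h3
    exact ⟨b, Finset.mem_of_mem_filter b hb⟩
  obtain ⟨b0, hb0⟩ := hBne
  have hAcard : c * n' ≤ (A.card : ℝ) := by
    refine le_trans (hB b0 hb0) ?_
    exact_mod_cast Finset.card_le_card (Finset.filter_subset _ _)
  have hABcard : (A.card : ℝ) + ((Aᶜ : Finset V).card : ℝ) = (n' : ℝ) := by
    have := Finset.card_add_card_compl A
    rw [hn] at this
    exact_mod_cast this
  -- choose S
  obtain ⟨S, hSsub, hScard⟩ := Finset.exists_subset_card_eq hvdeg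
  have hvS : v ∉ S := by
    intro h
    exact G.loopless.irrefl v ((Finset.mem_filter.1 (hSsub h)).2)
  set W : Finset V := insert v S with hW
  have hWcard : W.card = k + 1 := by
    rw [hW, Finset.card_insert_of_notMem hvS, hScard]
  have hWA : ∀ w ∈ W, w ∈ A := by
    intro w hw
    rcases Finset.mem_insert.1 hw with h | h
    · exact h ▸ hv
    · exact (Finset.mem_filter.1 (hSsub h)).1
  set T0 : Finset V := Aᶜ.filter (fun b => ∀ w ∈ W, G.Adj w b) with hT0
  have hT0sub : T0 ⊆ Aᶜ := Finset.filter_subset _ _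
  have hsub : Aᶜ \ T0 ⊆ W.biUnion (fun w => Aᶜ \ Aᶜ.filter (G.Adj w)) := by
    intro b hb
    rw [Finset.mem_sdiff] at hb
    obtain ⟨hbB, hbT⟩ := hb
    rw [hT0, Finset.mem_filter] at hbT
    push_neg at hbT
    obtain ⟨w, hw, hnadj⟩ := hbT hbB
    rw [Finset.mem_biUnion]
    exact ⟨w, hw, Finset.mem_sdiff.2 ⟨hbB, by simp [hnadj]⟩⟩
  have hcount : (((Aᶜ : Finset V) \ T0).card : ℝ) ≤ ((k:ℝ) + 1) * (((Aᶜ:Finset V).card:ℝ) - c * n') := by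
    have h1 : (Aᶜ \ T0).card ≤ ∑ w ∈ W, (Aᶜ \ Aᶜ.filter (G.Adj w)).card :=
      le_trans (Finset.card_le_card hsub) (Finset.card_biUnion_le)
    have h2 : ∀ w ∈ W, ((Aᶜ \ Aᶜ.filter (G.Adj w)).card : ℝ) ≤ ((Aᶜ:Finset V).card:ℝ) - c * n' := by
      intro w hw
      have hcs : (Aᶜ \ Aᶜ.filter (G.Adj w)).card = (Aᶜ:Finset V).card - (Aᶜ.filter (G.Adj w)).card :=
        Finset.card_sdiff_of_subset (Finset.filter_subset _ _)
      have hle : (Aᶜ.filter (G.Adj w)).card ≤ (Aᶜ:Finset V).card :=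
        Finset.card_le_card (Finset.filter_subset _ _)
      have := hA w (hWA w hw)
      rw [hcs]
      push_cast [hle]
      linarith
    calc (((Aᶜ:Finset V) \ T0).card : ℝ) ≤ ∑ w ∈ W, ((Aᶜ \ Aᶜ.filter (G.Adj w)).card : ℝ) := by
          exact_mod_cast h1
      _ ≤ ∑ _w ∈ W, (((Aᶜ:Finset V).card:ℝ) - c * n') := Finset.sum_le_sum h2
      _ = ((k:ℝ) + 1) * (((Aᶜ:Finset V).card:ℝ) - c * n') := by
          rw [Finset.sum_const, hWcard]; push_cast; ring
  have hT0card : (k:ℝ) ≤ (T0.card : ℝ) := by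
    have hid : ((Aᶜ \ T0).card : ℝ) = ((Aᶜ:Finset V).card:ℝ) - (T0.card:ℝ) := by
      rw [Finset.card_sdiff_of_subset hT0sub]
      push_cast [Finset.card_le_card hT0sub]
      ring
    have hBle : ((Aᶜ:Finset V).card:ℝ) ≤ (n':ℝ) - c * n' := by linarith
    have hBge : (0:ℝ) ≤ ((Aᶜ:Finset V).card:ℝ) := by positivity
    have h1 : ((2*(k:ℝ)+1)*c - k) * n' ≤ (T0.card:ℝ) := by
      nlinarith [mul_le_mul_of_nonneg_left hBle hkpos.le]
    have h2 : ((2*(k:ℝ)+1)*c - k) * (22*k) = 5*k - 3 := by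
      linear_combination (2*(k:ℝ)+1) * hcval
    have h3 : (k:ℝ)*(22*k) ≤ (5*k-3) * n' := by
      nlinarith [mul_le_mul_of_nonneg_left hn2R (show (0:ℝ) ≤ 5*k-3 by linarith)]
    have h22 : (0:ℝ) < 22*(k:ℝ) := by linarith
    have h4 : (k:ℝ) ≤ ((2*(k:ℝ)+1)*c - k) * n' := by
      have h5 : (k:ℝ)*(22*k) ≤ (((2*(k:ℝ)+1)*c - k) * n') * (22*k) := by
        have h6 : (((2*(k:ℝ)+1)*c - k) * n') * (22*k) = (5*k-3) * n' := by
          linear_combination (n':ℝ) * h2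
        linarith [h3, h6.ge]
      exact le_of_mul_le_mul_right h5 h22
    linarith
  obtain ⟨T, hTsub, hTcard⟩ := Finset.exists_subset_card_eq
    (show k ≤ T0.card by exact_mod_cast hT0card)
  have hTB : ∀ t ∈ T, t ∈ Aᶜ := fun t ht => hT0sub (hTsub ht)
  have hTadj : ∀ t ∈ T, ∀ w ∈ W, G.Adj w t := fun t ht =>
    (Finset.mem_filter.1 (hTsub ht)).2
  refine ⟨v, S, T, hScard, hTcard, ?_, hvS, ?_, ?_, ?_, ?_⟩
  · refine Finset.disjoint_left.2 fun x hxS hxT => ?_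
    exact (Finset.mem_compl.1 (hTB x hxT)) (Finset.mem_filter.1 (hSsub hxS)).1
  · intro h
    exact (Finset.mem_compl.1 (hTB v h)) hv
  · intro s hs
    exact (Finset.mem_filter.1 (hSsub hs)).2
  · intro t ht
    exact hTadj t ht v (Finset.mem_insert_self v S)
  · intro s hs t ht
    exact hTadj t ht s (Finset.mem_insert_of_mem hs)
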